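/- For the interpolated Grover Hamiltonian H(λ) = (1−λ)(I − |s⟩⟨s|) + λ(I − |w⟩⟨w|), the spectral gap between its two lowest eigenvalues (restricted to the span of |s⟩ and |w⟩) is g(λ) = √(1 − 4·((N−1)/N)·λ(1−λ)). -/

import Mathlib

open Matrix

def basisVec {N : ℕ} (w : Fin N) : Fin N → ℂ := fun i => if i = w then 1 else 0

noncomputable def unif (N : ℕ) : Fin N → ℂ := fun _ => ((1 / Real.sqrt N : ℝ) : ℂ)

/-- The interpolated Grover Hamiltonian
`H(λ) = (1-λ)(I - |s⟩⟨s|) + λ(I - |w⟩⟨w|)`. -/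
noncomputable def groverHam (N : ℕ) (w : Fin N) (lam : ℝ) : Matrix (Fin N) (Fin N) ℂ :=
  ((1 - lam : ℝ) : ℂ) • (1 - Matrix.vecMulVec (unif N) (unif N)) +
    ((lam : ℝ) : ℂ) • (1 - Matrix.vecMulVec (basisVec w) (basisVec w))

lemma vmv_mulVec {N : ℕ} (x y v : Fin N → ℂ) :
    (Matrix.vecMulVec x y).mulVec v = (y ⬝ᵥ v) • x := by
  funext i
  simp [vecMulVec_apply, mulVec, dotProduct, Finset.mul_sum, mul_comm, mul_assoc, mul_left_comm]

lemma dot_ee {N : ℕ} (w : Fin N) : basisVec w ⬝ᵥ basisVec w = 1 := by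
  simp [basisVec, dotProduct]

lemma dot_se {N : ℕ} (w : Fin N) :
    unif N ⬝ᵥ basisVec w = ((1 / Real.sqrt N : ℝ) : ℂ) := by
  simp [unif, basisVec, dotProduct]

lemma dot_es {N : ℕ} (w : Fin N) :
    basisVec w ⬝ᵥ unif N = ((1 / Real.sqrt N : ℝ) : ℂ) := by
  simp [unif, basisVec, dotProduct]

lemma dot_ss {N : ℕ} (hN : 1 ≤ N) : unif N ⬝ᵥ unif N = 1 := by
  have h0 : (0:ℝ) < N := by exact_mod_cast hN
  simp only [unif, dotProduct, Finset.sum_const, Finset.card_univ, Fintype.card_fin]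
  rw [← Complex.ofReal_mul]
  norm_cast
  rw [div_mul_div_comm, one_mul, Real.mul_self_sqrt h0.le]
  field_simp
  rw [nsmul_eq_mul, mul_one_div_cancel (by exact_mod_cast (by omega : N ≠ 0))]

lemma eigvec {N : ℕ} (hN : 1 ≤ N) (w : Fin N) (lam μ : ℝ) (α β : ℂ)
    (h1 : (lam:ℂ)*α - (1-(lam:ℂ))*((1/Real.sqrt N : ℝ):ℂ)*β = (μ:ℂ)*α)
    (h2 : (1-(lam:ℂ))*β - (lam:ℂ)*((1/Real.sqrt N : ℝ):ℂ)*α = (μ:ℂ)*β) :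
    (groverHam N w lam).mulVec (α • unif N + β • basisVec w)
      = (μ:ℂ) • (α • unif N + β • basisVec w) := by
  have hmv : ∀ v : Fin N → ℂ, (groverHam N w lam).mulVec v
      = (1-(lam:ℂ)) • (v - (unif N ⬝ᵥ v) • unif N)
        + ((lam:ℝ):ℂ) • (v - (basisVec w ⬝ᵥ v) • basisVec w) := by
    intro v
    simp only [groverHam, add_mulVec, smul_mulVec, sub_mulVec, one_mulVec, vmv_mulVec,
      Complex.ofReal_sub, Complex.ofReal_one]
  rw [hmv]
  have hs : unif N ⬝ᵥ (α • unif N + β • basisVec w) = α + β * ((1/Real.sqrt N : ℝ):ℂ) := by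
    simp [dotProduct_add, dotProduct_smul, dot_ss hN, dot_se, smul_eq_mul]
  have he : basisVec w ⬝ᵥ (α • unif N + β • basisVec w)
      = α * ((1/Real.sqrt N : ℝ):ℂ) + β := by
    simp [dotProduct_add, dotProduct_smul, dot_es, dot_ee, smul_eq_mul, mul_comm]
  rw [hs, he]
  have c1 : α - (1-(lam:ℂ)) * (α + β * ((1/Real.sqrt N : ℝ):ℂ)) = (μ:ℂ) * α := by
    linear_combination h1
  have c2 : β - ((lam:ℝ):ℂ) * (α * ((1/Real.sqrt N : ℝ):ℂ) + β) = (μ:ℂ) * β := by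
    linear_combination h2
  have key : (1-(lam:ℂ)) • ((α • unif N + β • basisVec w)
        - (α + β * ((1/Real.sqrt N : ℝ):ℂ)) • unif N)
      + ((lam:ℝ):ℂ) • ((α • unif N + β • basisVec w)
        - (α * ((1/Real.sqrt N : ℝ):ℂ) + β) • basisVec w)
      = (α - (1-(lam:ℂ)) * (α + β * ((1/Real.sqrt N : ℝ):ℂ))) • unif N
        + (β - ((lam:ℝ):ℂ) * (α * ((1/Real.sqrt N : ℝ):ℂ) + β)) • basisVec w := by
    module
  rw [key, c1, c2]
  module

lemma comb_mem {N : ℕ} (w : Fin N) (α β : ℂ) :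
    α • unif N + β • basisVec w ∈
      Submodule.span ℂ ({unif N, basisVec w} : Set (Fin N → ℂ)) := by
  exact Submodule.add_mem _
    (Submodule.smul_mem _ _ (Submodule.subset_span (Set.mem_insert _ _)))
    (Submodule.smul_mem _ _ (Submodule.subset_span (Set.mem_insert_of_mem _ rfl)))

lemma comb_ne {N : ℕ} (hN : 2 ≤ N) (w : Fin N) (α β : ℂ)
    (h : ¬(α = 0 ∧ β = 0)) : α • unif N + β • basisVec w ≠ 0 := by
  have hNpos : (0:ℝ) < N := by positivity
  have ha : ((1 / Real.sqrt N : ℝ) : ℂ) ≠ 0 := by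
    have : Real.sqrt N ≠ 0 := by positivity
    simp [this]
  have : Nontrivial (Fin N) := Fin.nontrivial_iff_two_le.mpr hN
  intro h0
  obtain ⟨i, hi⟩ := exists_ne w
  have hiv := congrFun h0 i
  have hwv := congrFun h0 w
  simp [unif, basisVec, hi] at hiv
  rcases hiv with hiv | hiv
  · simp [unif, basisVec, hiv] at hwv
    exact h ⟨hiv, hwv⟩
  · exact absurd (by exact_mod_cast hiv) (by
      have : Real.sqrt N ≠ 0 := by positivity
      simpa [div_eq_zero_iff] using this)

/-- On the two-dimensional invariant subspace spanned by `|s⟩` and `|w⟩`,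
the two eigenvalues of `H(λ)` differ by
`g(λ) = √(1 - 4((N-1)/N)λ(1-λ))`. -/
theorem grover_spectral_gap (N : ℕ) (hN : 2 ≤ N) (w : Fin N) (lam : ℝ)
    (hl : lam ∈ Set.Icc (0 : ℝ) 1) :
    ∃ μ₁ μ₂ : ℝ, μ₁ ≤ μ₂ ∧
      (∃ u ∈ Submodule.span ℂ ({unif N, basisVec w} : Set (Fin N → ℂ)), u ≠ 0 ∧
        (groverHam N w lam).mulVec u = ((μ₁ : ℝ) : ℂ) • u) ∧
      (∃ v ∈ Submodule.span ℂ ({unif N, basisVec w} : Set (Fin N → ℂ)), v ≠ 0 ∧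
        (groverHam N w lam).mulVec v = ((μ₂ : ℝ) : ℂ) • v) ∧
      μ₂ - μ₁ = Real.sqrt (1 - 4 * ((N - 1 : ℝ) / N) * lam * (1 - lam)) := by
  obtain ⟨hl0, hl1⟩ := hl
  have hN1 : 1 ≤ N := le_trans (by norm_num) hN
  have hNpos : (0:ℝ) < N := by positivity
  set a : ℝ := 1 / Real.sqrt N with ha_def
  have ha2 : a ^ 2 = 1 / N := by
    rw [ha_def, div_pow, one_pow, Real.sq_sqrt hNpos.le]
  have ha_pos : 0 < a := by rw [ha_def]; positivity
  set c : ℝ := (N - 1 : ℝ) / N with hc_def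
  have hc0 : 0 ≤ c := by
    apply div_nonneg _ hNpos.le
    have : (1:ℝ) ≤ N := by exact_mod_cast hN1
    linarith
  have hc1 : c ≤ 1 := by
    rw [hc_def, div_le_one hNpos]; linarith
  have hexpr0 : 0 ≤ 1 - 4 * c * lam * (1 - lam) := by
    nlinarith [sq_nonneg (1 - 2*lam), mul_nonneg hl0 (by linarith : (0:ℝ) ≤ 1 - lam)]
  set g : ℝ := Real.sqrt (1 - 4 * c * lam * (1 - lam)) with hg_def
  have hg0 : 0 ≤ g := Real.sqrt_nonneg _
  have hg2 : g ^ 2 = 1 - 4 * c * lam * (1 - lam) := Real.sq_sqrt hexpr0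
  have hg_le1 : g ≤ 1 := by
    have h1 : 1 - 4 * c * lam * (1 - lam) ≤ 1 := by
      nlinarith [mul_nonneg (mul_nonneg hc0 hl0) (by linarith : (0:ℝ) ≤ 1 - lam)]
    calc g ≤ Real.sqrt 1 := Real.sqrt_le_sqrt h1
      _ = 1 := Real.sqrt_one
  have hca : c = 1 - a^2 := by
    rw [hc_def, ha2]; field_simp
  refine ⟨(1-g)/2, (1+g)/2, by linarith, ?_, ?_, by rw [hg_def]; ring⟩
  · -- eigenvector for μ₁ = (1-g)/2, α = (1-lam)*a, β = lam - μ₁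
    set μ : ℝ := (1-g)/2 with hμ_def
    have hquad : μ^2 - μ + lam*(1-lam)*c = 0 := by
      have : μ^2 - μ = (g^2 - 1)/4 := by rw [hμ_def]; ring
      rw [this, hg2]; ring
    refine ⟨(((1-lam)*a : ℝ):ℂ) • unif N + ((lam - μ : ℝ):ℂ) • basisVec w,
      comb_mem w _ _, comb_ne hN w _ _ ?_, ?_⟩
    · rintro ⟨hα, hβ⟩
      have hα' : (1-lam)*a = 0 := by exact_mod_cast hα
      have hβ' : lam - μ = 0 := by exact_mod_cast hβ
      have hlam1 : lam = 1 := by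
        rcases mul_eq_zero.mp hα' with h | h
        · linarith
        · exact absurd h ha_pos.ne'
      have : μ ≤ 1/2 := by rw [hμ_def]; linarith
      rw [hlam1] at hβ'; linarith
    · apply eigvec hN1
      · have r1 : lam*((1-lam)*a) - (1-lam)*a*(lam-μ) = μ*((1-lam)*a) := by ring
        rw [← ha_def]
        exact_mod_cast r1
      · have r2 : (1-lam)*(lam-μ) - lam*a*((1-lam)*a) = μ*(lam-μ) := by
          linear_combination hquad - lam*(1-lam)*hca
        rw [← ha_def]
        exact_mod_cast r2
  · -- eigenvector for μ₂ = (1+g)/2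
    set μ : ℝ := (1+g)/2 with hμ_def
    have hquad : μ^2 - μ + lam*(1-lam)*c = 0 := by
      have : μ^2 - μ = (g^2 - 1)/4 := by rw [hμ_def]; ring
      rw [this, hg2]; ring
    by_cases hlam1 : lam = 1
    · -- use α = -1, β = a
      subst hlam1
      have hg1 : g = 1 := by
        rw [hg_def]; norm_num
      have hμ1 : μ = 1 := by rw [hμ_def, hg1]; norm_num
      refine ⟨((-1 : ℝ):ℂ) • unif N + ((a:ℝ):ℂ) • basisVec w,
        comb_mem w _ _, comb_ne hN w _ _ (by rintro ⟨h, -⟩; norm_num at h), ?_⟩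
      apply eigvec hN1
      · have r1 : (1:ℝ)*(-1) - (1-1)*a*a = μ*(-1) := by rw [hμ1]; ring
        rw [← ha_def]
        exact_mod_cast r1
      · have r2 : (1-(1:ℝ))*a - 1*a*(-1) = μ*a := by rw [hμ1]; ring
        rw [← ha_def]
        exact_mod_cast r2
    · refine ⟨(((1-lam)*a : ℝ):ℂ) • unif N + ((lam - μ : ℝ):ℂ) • basisVec w,
        comb_mem w _ _, comb_ne hN w _ _ ?_, ?_⟩
      · rintro ⟨hα, -⟩
        have hα' : (1-lam)*a = 0 := by exact_mod_cast hα
        rcases mul_eq_zero.mp hα' with h | h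
        · exact hlam1 (by linarith)
        · exact absurd h ha_pos.ne'
      · apply eigvec hN1
        · have r1 : lam*((1-lam)*a) - (1-lam)*a*(lam-μ) = μ*((1-lam)*a) := by ring
          rw [← ha_def]
          exact_mod_cast r1
        · have r2 : (1-lam)*(lam-μ) - lam*a*((1-lam)*a) = μ*(lam-μ) := by
            linear_combination hquad - lam*(1-lam)*hca
          rw [← ha_def]
          exact_mod_cast r2
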